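/- Define the transformation Φ(u) = e^{2iω/u}·u^{-2iω}·φ(u). If φ : (0,1) → ℂ is twice differentiable and satisfies [ℓ(ℓ+1)u - s²u² - 4iλ - 16u(1+u)λ²]φ + [u³ + 4iu(1-2u²)λ]φ' - (1-u)u³φ'' = 0 with λ = ω/2, then Φ satisfies [s²u² - ℓ(ℓ+1)u - 2iω]Φ - u(u² - 2iω)Φ' + (1-u)u³Φ'' = 0 on (0,1). -/

import Mathlib

open Complex

noncomputable def gfun (ω : ℂ) (v : ℝ) : ℂ :=
  Complex.exp (2 * I * ω * (v:ℂ)⁻¹ - 2 * I * ω * ((Real.log v : ℝ) : ℂ))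

lemma gfun_eq (ω : ℂ) {v : ℝ} (hv : 0 < v) :
    Complex.exp (2 * I * ω / v) * (v:ℂ) ^ (-2 * I * ω) = gfun ω v := by
  have hvc : (v:ℂ) ≠ 0 := Complex.ofReal_ne_zero.mpr hv.ne'
  rw [gfun, Complex.cpow_def_of_ne_zero hvc, ← Complex.exp_add,
    ← Complex.ofReal_log hv.le]
  congr 1
  ring

lemma hasDerivAt_gfun (ω : ℂ) {v : ℝ} (hv : 0 < v) :
    HasDerivAt (gfun ω) (gfun ω v * (-(2 * I * ω) * (1 + (v:ℂ)) / (v:ℂ) ^ 2)) v := by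
  have hvc : (v:ℂ) ≠ 0 := Complex.ofReal_ne_zero.mpr hv.ne'
  have h1 : HasDerivAt (fun w : ℝ => ((w:ℂ))⁻¹) (-((v:ℂ) ^ 2)⁻¹) v :=
    (hasDerivAt_inv hvc).comp_ofReal
  have h2 : HasDerivAt (fun w : ℝ => ((Real.log w : ℝ) : ℂ)) ((v⁻¹ : ℝ) : ℂ) v := by
    simpa using (Real.hasDerivAt_log hv.ne').ofReal_comp
  have raw : HasDerivAt (gfun ω)
      (gfun ω v * (2 * I * ω * -((v:ℂ) ^ 2)⁻¹ - 2 * I * ω * ((v⁻¹ : ℝ) : ℂ))) v := by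
    show HasDerivAt (fun x => gfun ω x) _ v
    simpa [gfun] using ((h1.const_mul (2*I*ω)).sub (h2.const_mul (2*I*ω))).cexp
  have heq : gfun ω v * (-(2 * I * ω) * (1 + (v:ℂ)) / (v:ℂ) ^ 2)
      = gfun ω v * (2 * I * ω * -((v:ℂ) ^ 2)⁻¹ - 2 * I * ω * ((v⁻¹ : ℝ) : ℂ)) := by
    push_cast
    field_simp
    ring
  rw [heq]; exact raw

open Complex in
theorem transformation_master_equation (s ℓ ω : ℂ) (φ : ℝ → ℂ)
    (hφ1 : ∀ u ∈ Set.Ioo (0:ℝ) 1, DifferentiableAt ℝ φ u)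
    (hφ2 : ∀ u ∈ Set.Ioo (0:ℝ) 1, DifferentiableAt ℝ (deriv φ) u)
    (hode : ∀ u ∈ Set.Ioo (0:ℝ) 1,
      (ℓ * (ℓ + 1) * u - s ^ 2 * u ^ 2 - 4 * I * (ω / 2)
          - 16 * u * (1 + u) * (ω / 2) ^ 2) * φ u
        + ((u:ℂ) ^ 3 + 4 * I * u * (1 - 2 * u ^ 2) * (ω / 2)) * deriv φ u
        - (1 - u) * (u:ℂ) ^ 3 * deriv (deriv φ) u = 0) :
    ∀ u ∈ Set.Ioo (0:ℝ) 1,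
      (s ^ 2 * u ^ 2 - ℓ * (ℓ + 1) * u - 2 * I * ω)
          * (Complex.exp (2 * I * ω / u) * (u:ℂ) ^ (-2 * I * ω) * φ u)
        - u * ((u:ℂ) ^ 2 - 2 * I * ω)
          * deriv (fun v : ℝ => Complex.exp (2 * I * ω / v) * (v:ℂ) ^ (-2 * I * ω) * φ v) u
        + (1 - u) * (u:ℂ) ^ 3
          * deriv (deriv (fun v : ℝ => Complex.exp (2 * I * ω / v) * (v:ℂ) ^ (-2 * I * ω) * φ v)) u
        = 0 := by
  intro u hu
  have hu0 : (0:ℝ) < u := hu.1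
  have huc : (u:ℂ) ≠ 0 := Complex.ofReal_ne_zero.mpr hu0.ne'
  have hΦd : ∀ v ∈ Set.Ioo (0:ℝ) 1,
      HasDerivAt (fun v : ℝ => Complex.exp (2 * I * ω / v) * (v:ℂ) ^ (-2 * I * ω) * φ v)
        (gfun ω v * (-(2 * I * ω) * (1 + (v:ℂ)) / (v:ℂ) ^ 2) * φ v
          + gfun ω v * deriv φ v) v := by
    intro v hv
    have h := (hasDerivAt_gfun ω hv.1).mul (hφ1 v hv).hasDerivAt
    refine h.congr_of_eventuallyEq ?_
    filter_upwards [isOpen_Ioo.eventually_mem hv] with w hw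
    rw [gfun_eq ω hw.1]; rfl
  have hEe : deriv (fun v : ℝ => Complex.exp (2 * I * ω / v) * (v:ℂ) ^ (-2 * I * ω) * φ v)
      =ᶠ[nhds u] (fun v : ℝ =>
        gfun ω v * (-(2 * I * ω) * (1 + (v:ℂ)) / (v:ℂ) ^ 2) * φ v
          + gfun ω v * deriv φ v) := by
    filter_upwards [isOpen_Ioo.eventually_mem hu] with w hw
    exact (hΦd w hw).deriv
  have hcast : HasDerivAt (fun v : ℝ => ((v : ℝ) : ℂ)) 1 u := by
    simpa using (hasDerivAt_id u).ofReal_comp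
  have hD1 : HasDerivAt (fun v : ℝ => -(2 * I * ω) * (1 + (v:ℂ)) / (v:ℂ) ^ 2)
      ((-(2 * I * ω) * 1 * (u:ℂ) ^ 2 - -(2 * I * ω) * (1 + (u:ℂ)) * (2 * (u:ℂ)))
        / ((u:ℂ) ^ 2) ^ 2) u := by
    have hA : HasDerivAt (fun v : ℝ => (1:ℂ) + (v:ℂ)) 1 u := hcast.const_add 1
    have hB := hA.const_mul (-(2 * I * ω))
    have hC : HasDerivAt (fun v : ℝ => (v:ℂ) ^ 2) (2 * (u:ℂ)) u := by
      have := hcast.mul hcast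
      simpa [pow_two, two_mul, Pi.mul_def] using this
    exact hB.div hC (pow_ne_zero 2 huc)
  have hE : HasDerivAt (fun v : ℝ =>
        gfun ω v * (-(2 * I * ω) * (1 + (v:ℂ)) / (v:ℂ) ^ 2) * φ v
          + gfun ω v * deriv φ v) _ u :=
    (((hasDerivAt_gfun ω hu0).mul hD1).mul (hφ1 u hu).hasDerivAt).add
      ((hasDerivAt_gfun ω hu0).mul (hφ2 u hu).hasDerivAt)
  have h2 : deriv (deriv (fun v : ℝ =>
      Complex.exp (2 * I * ω / v) * (v:ℂ) ^ (-2 * I * ω) * φ v)) u = _ :=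
    hEe.deriv_eq.trans hE.deriv
  rw [(hΦd u hu).deriv, h2, gfun_eq ω hu0]
  simp only [Pi.mul_apply]
  have key := hode u hu
  have hui : (u:ℂ) * (u:ℂ)⁻¹ = 1 := mul_inv_cancel₀ huc
  have hI : (I:ℂ) ^ 2 = -1 := Complex.I_sq
  linear_combination (norm := ring1) (-(gfun ω u)) * key
    + (4*I*ω*(gfun ω u)*(φ u) - 4*(u:ℂ)*I*ω*(gfun ω u)*(deriv φ u) - 4*(u:ℂ)*I ^ 2*ω ^ 2*(gfun ω u)*(φ u) + 4*(u:ℂ)*(u:ℂ)⁻¹*I*ω*(gfun ω u)*(φ u) + 4*(u:ℂ)*(u:ℂ)⁻¹ ^ 2*I ^ 2*ω ^ 2*(gfun ω u)*(φ u) - 4*(u:ℂ) ^ 2*I ^ 2*ω ^ 2*(gfun ω u)*(φ u) - 4*(u:ℂ) ^ 2*(u:ℂ)⁻¹*I*ω*(gfun ω u)*(deriv φ u) - 4*(u:ℂ) ^ 2*(u:ℂ)⁻¹*I ^ 2*ω ^ 2*(gfun ω u)*(φ u) + 4*(u:ℂ) ^ 2*(u:ℂ)⁻¹ ^ 2*I*ω*(gfun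 ω u)*(φ u) + 4*(u:ℂ) ^ 2*(u:ℂ)⁻¹ ^ 2*I ^ 2*ω ^ 2*(gfun ω u)*(φ u) + 4*(u:ℂ) ^ 2*(u:ℂ)⁻¹ ^ 3*I ^ 2*ω ^ 2*(gfun ω u)*(φ u) + 4*(u:ℂ) ^ 3*I*ω*(gfun ω u)*(deriv φ u) - 4*(u:ℂ) ^ 3*(u:ℂ)⁻¹*I ^ 2*ω ^ 2*(gfun ω u)*(φ u) - 2*(u:ℂ) ^ 3*(u:ℂ)⁻¹ ^ 2*I*ω*(gfun ω u)*(φ u) - 4*(u:ℂ) ^ 3*(u:ℂ)⁻¹ ^ 2*I ^ 2*ω ^ 2*(gfun ω u)*(φ u) + 4*(u:ℂ) ^ 3*(u:ℂ)⁻¹ ^ 3*I*ω*(gfun ω u)*(φ u) + 4*(u:ℂ) ^ 3*(u:ℂ)⁻¹ ^ 3*I ^ 2*ω ^ 2*(gfun ω u)*(φ u) + 4*(u:ℂ) ^ 4*(u:ℂ)⁻¹*I*ω*(gfun ω u)*(deriv φ u) - 2*(u:ℂ) ^ 4*(u:ℂ)⁻¹ ^ 2*I*ω*(gfun ω u)*(φ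 u) - 4*(u:ℂ) ^ 4*(u:ℂ)⁻¹ ^ 2*I ^ 2*ω ^ 2*(gfun ω u)*(φ u) - 2*(u:ℂ) ^ 4*(u:ℂ)⁻¹ ^ 3*I*ω*(gfun ω u)*(φ u) - 4*(u:ℂ) ^ 4*(u:ℂ)⁻¹ ^ 3*I ^ 2*ω ^ 2*(gfun ω u)*(φ u) - 2*(u:ℂ) ^ 5*(u:ℂ)⁻¹ ^ 3*I*ω*(gfun ω u)*(φ u) - 4*(u:ℂ) ^ 5*(u:ℂ)⁻¹ ^ 3*I ^ 2*ω ^ 2*(gfun ω u)*(φ u)) * hui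
    + (-4*(u:ℂ)*ω ^ 2*(gfun ω u)*(φ u) - 4*(u:ℂ) ^ 2*ω ^ 2*(gfun ω u)*(φ u)) * hI
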